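/- Let H be an m × n matrix over GF(2) of full row rank m, let 0 ≤ p < τ < 1/2, and let W be a random vector in (ZMod 2)^n whose n coordinates are i.i.d. Bernoulli(p). Let ŵ : (ZMod 2)^m → (ZMod 2)^n be any function assigning to each syndrome q a minimum-Hamming-weight element of the coset {w : Hw = q}. Then the false rejection probability of the threshold decoder satisfies Pr[wt(ŵ(HW)) > τn] ≤ 2^{-n·D(τ‖p)} + Pr[ŵ(HW) ≠ W], where D(τ‖p) := τ log₂(τ/p) + (1−τ) log₂((1−τ)/(1−p)). In particular, Pr[wt(W) > τn] ≤ 2^{-n·D(τ‖p)}. -/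
import Mathlib


open Classical in
/-- Probability of the event `P` for a random word in `(ZMod 2)^n` whose `n` coordinates are
i.i.d. Bernoulli(`p`): each word `w` has probability `p^{wt(w)} (1-p)^{n - wt(w)}`. -/
noncomputable def bernProb (n : ℕ) (p : ℝ) (P : (Fin n → ZMod 2) → Prop) : ℝ :=
  ∑ w : Fin n → ZMod 2,
    if P w then p ^ hammingNorm w * (1 - p) ^ (n - hammingNorm w) else 0

/-- The binary Kullback–Leibler divergence
`D(τ‖p) = τ log₂(τ/p) + (1-τ) log₂((1-τ)/(1-p))`. -/
noncomputable def klBern (τ p : ℝ) : ℝ :=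
  τ * Real.logb 2 (τ / p) + (1 - τ) * Real.logb 2 ((1 - τ) / (1 - p))

private lemma sum_zmod2 (f : ZMod 2 → ℝ) : ∑ x : ZMod 2, f x = f 0 + f 1 := by
  have h : (Finset.univ : Finset (ZMod 2)) = {0, 1} := by decide
  rw [h, Finset.sum_insert (by decide), Finset.sum_singleton]

private lemma term_eq_prod {n : ℕ} (τ : ℝ) (w : Fin n → ZMod 2) :
    τ ^ hammingNorm w * (1 - τ) ^ (n - hammingNorm w)
      = ∏ i, (if w i ≠ 0 then τ else 1 - τ) := by
  classical
  rw [← Finset.prod_filter_mul_prod_filter_not Finset.univ (fun i => w i ≠ 0)]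
  have h1 : (∏ i ∈ Finset.univ.filter (fun i => w i ≠ 0), (if w i ≠ 0 then τ else 1 - τ))
      = τ ^ hammingNorm w := by
    rw [Finset.prod_congr rfl (fun i hi => by
      rw [if_pos (Finset.mem_filter.mp hi).2]), Finset.prod_const]
    rfl
  have h2 : (∏ i ∈ Finset.univ.filter (fun i => ¬ w i ≠ 0), (if w i ≠ 0 then τ else 1 - τ))
      = (1 - τ) ^ (n - hammingNorm w) := by
    rw [Finset.prod_congr rfl (fun i hi => by
      rw [if_neg (Finset.mem_filter.mp hi).2]), Finset.prod_const]
    congr 1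
    have := Finset.card_filter_add_card_filter_not
      (s := (Finset.univ : Finset (Fin n))) (p := fun i => w i ≠ 0)
    simp only [Finset.card_univ, Fintype.card_fin] at this
    have hN : hammingNorm w = (Finset.univ.filter (fun i => w i ≠ 0)).card := rfl
    omega
  rw [h1, h2]

private lemma sum_bern_one (n : ℕ) (τ : ℝ) :
    ∑ w : Fin n → ZMod 2, τ ^ hammingNorm w * (1 - τ) ^ (n - hammingNorm w) = 1 := by
  classical
  simp_rw [term_eq_prod τ]
  rw [← Fintype.prod_sum (fun (_ : Fin n) (x : ZMod 2) => if x ≠ 0 then τ else 1 - τ)]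
  have : ∀ _i : Fin n, (∑ x : ZMod 2, if x ≠ 0 then τ else 1 - τ) = 1 := by
    intro i
    rw [sum_zmod2]
    norm_num
  rw [Finset.prod_congr rfl (fun i _ => this i), Finset.prod_const, one_pow]

private lemma rpow_neg_klBern {p τ : ℝ} (hp : 0 < p) (hpτ : p < τ) (hτ : τ < 1 / 2) (n : ℕ) :
    (2 : ℝ) ^ (-((n : ℝ) * klBern τ p))
      = (p / τ) ^ (τ * n) * ((1 - p) / (1 - τ)) ^ ((n : ℝ) - τ * n) := by
  have hτ0 : 0 < τ := hp.trans hpτ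
  have h1τ : 0 < 1 - τ := by linarith
  have ha : 0 < p / τ := div_pos hp hτ0
  have hb : 0 < (1 - p) / (1 - τ) := div_pos (by linarith) h1τ
  have hla : Real.logb 2 (τ / p) = - Real.logb 2 (p / τ) := by
    rw [← Real.logb_inv, inv_div]
  have hlb : Real.logb 2 ((1 - τ) / (1 - p)) = - Real.logb 2 ((1 - p) / (1 - τ)) := by
    rw [← Real.logb_inv, inv_div]
  have hexp : -((n : ℝ) * klBern τ p)
      = Real.logb 2 (p / τ) * (τ * n) + Real.logb 2 ((1 - p) / (1 - τ)) * ((n : ℝ) - τ * n) := by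
    rw [klBern, hla, hlb]; ring
  rw [hexp, Real.rpow_add (by norm_num : (0:ℝ) < 2),
    Real.rpow_mul (by norm_num : (0:ℝ) ≤ 2), Real.rpow_mul (by norm_num : (0:ℝ) ≤ 2),
    Real.rpow_logb (by norm_num) (by norm_num) ha,
    Real.rpow_logb (by norm_num) (by norm_num) hb]

private lemma key_term {p τ : ℝ} (hp : 0 < p) (hpτ : p < τ) (hτ : τ < 1 / 2)
    {n k : ℕ} (hkn : k ≤ n) (hk : τ * n < k) :
    p ^ k * (1 - p) ^ (n - k)
      ≤ (2 : ℝ) ^ (-((n : ℝ) * klBern τ p)) * (τ ^ k * (1 - τ) ^ (n - k)) := by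
  have hτ0 : 0 < τ := hp.trans hpτ
  have h1τ : 0 < 1 - τ := by linarith
  obtain ⟨a, ha_def⟩ : ∃ a : ℝ, p / τ = a := ⟨_, rfl⟩
  obtain ⟨b, hb_def⟩ : ∃ b : ℝ, (1 - p) / (1 - τ) = b := ⟨_, rfl⟩
  rw [rpow_neg_klBern hp hpτ hτ n, ha_def, hb_def]
  have ha : 0 < a := ha_def ▸ div_pos hp hτ0
  have hb1 : 1 < b := hb_def ▸ (one_lt_div h1τ).mpr (by linarith)
  have hb : 0 < b := by linarith
  have ha1 : a < 1 := ha_def ▸ (div_lt_one hτ0).mpr hpτ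
  have hab1 : a / b ≤ 1 := by
    rw [div_le_one hb]; linarith
  have hab0 : 0 < a / b := div_pos ha hb
  have hLHS : p ^ k * (1 - p) ^ (n - k) = (τ ^ k * (1 - τ) ^ (n - k)) * (a ^ k * b ^ (n - k)) := by
    rw [← ha_def, ← hb_def, div_pow, div_pow]
    field_simp
  rw [hLHS, mul_comm (a ^ (τ * ↑n) * b ^ ((n:ℝ) - τ * ↑n))]
  apply mul_le_mul_of_nonneg_left _ (by positivity)
  have hsplit : a ^ k * b ^ (n - k) = (a / b) ^ k * b ^ n := by
    rw [pow_sub₀ b hb.ne' hkn, div_pow]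
    field_simp
  have hsplit2 : a ^ (τ * n) * b ^ ((n:ℝ) - τ * n) = (a / b) ^ (τ * n) * b ^ (n:ℝ) := by
    rw [Real.div_rpow ha.le hb.le, Real.rpow_sub hb]
    field_simp
  rw [hsplit, hsplit2, Real.rpow_natCast b]
  apply mul_le_mul_of_nonneg_right _ (by positivity)
  calc (a / b) ^ k = (a / b) ^ (k : ℝ) := (Real.rpow_natCast _ k).symm
    _ ≤ (a / b) ^ (τ * n) := Real.rpow_le_rpow_of_exponent_ge hab0 hab1 hk.le

open Classical in
private lemma chernoff (n : ℕ) {p τ : ℝ} (hp0 : 0 ≤ p) (hpτ : p < τ) (hτ : τ < 1 / 2) :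
    bernProb n p (fun w => (hammingNorm w : ℝ) > τ * n)
      ≤ (2 : ℝ) ^ (-((n : ℝ) * klBern τ p)) := by
  have hτ0 : 0 < τ := lt_of_le_of_lt hp0 hpτ
  rcases eq_or_lt_of_le hp0 with hp | hp
  · -- p = 0
    have hz : bernProb n p (fun w => (hammingNorm w : ℝ) > τ * n) = 0 := by
      rw [bernProb]
      apply Finset.sum_eq_zero
      intro w _
      split_ifs with h
      · have hwt : 0 < hammingNorm w := by
          by_contra hc
          push_neg at hc
          interval_cases (hammingNorm w)
          simp only [Nat.cast_zero, gt_iff_lt] at h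
          nlinarith [Nat.cast_nonneg (α := ℝ) n]
        rw [← hp, zero_pow hwt.ne']
        ring
      · rfl
    rw [hz]
    positivity
  · -- p > 0
    have hstep : bernProb n p (fun w => (hammingNorm w : ℝ) > τ * n)
        ≤ ∑ w : Fin n → ZMod 2,
            (2 : ℝ) ^ (-((n : ℝ) * klBern τ p))
              * (τ ^ hammingNorm w * (1 - τ) ^ (n - hammingNorm w)) := by
      rw [bernProb]
      apply Finset.sum_le_sum
      intro w _
      split_ifs with h
      · have hkn : hammingNorm w ≤ n := by
          simpa using hammingNorm_le_card_fintype (x := w)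
        exact key_term hp hpτ hτ hkn h
      · have h1τ : 0 < 1 - τ := by linarith
        positivity
    calc bernProb n p (fun w => (hammingNorm w : ℝ) > τ * n)
        ≤ _ := hstep
      _ = (2 : ℝ) ^ (-((n : ℝ) * klBern τ p)) := by
          rw [← Finset.mul_sum, sum_bern_one n τ, mul_one]

open Classical in
private lemma bernProb_union (n : ℕ) {p : ℝ} (hp0 : 0 ≤ p) (hp1 : p ≤ 1)
    (A B C : (Fin n → ZMod 2) → Prop) (h : ∀ w, A w → B w ∨ C w) :
    bernProb n p A ≤ bernProb n p B + bernProb n p C := by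
  simp only [bernProb, ← Finset.sum_add_distrib]
  apply Finset.sum_le_sum
  intro w _
  have ht : 0 ≤ p ^ hammingNorm w * (1 - p) ^ (n - hammingNorm w) := by
    have : 0 ≤ 1 - p := by linarith
    positivity
  by_cases hA : A w
  · rw [if_pos hA]
    rcases h w hA with hB | hC
    · rw [if_pos hB]
      have : (0:ℝ) ≤ if C w then p ^ hammingNorm w * (1 - p) ^ (n - hammingNorm w) else 0 := by
        split_ifs <;> simp [ht]
      linarith
    · rw [if_pos hC]
      have : (0:ℝ) ≤ if B w then p ^ hammingNorm w * (1 - p) ^ (n - hammingNorm w) else 0 := by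
        split_ifs <;> simp [ht]
      linarith
  · rw [if_neg hA]
    have h1 : (0:ℝ) ≤ if B w then p ^ hammingNorm w * (1 - p) ^ (n - hammingNorm w) else 0 := by
      split_ifs <;> simp [ht]
    have h2 : (0:ℝ) ≤ if C w then p ^ hammingNorm w * (1 - p) ^ (n - hammingNorm w) else 0 := by
      split_ifs <;> simp [ht]
    linarith

/-- false-rejection-rate bound.  Let `H` have full row rank,
`0 ≤ p < τ < 1/2`, and let `W` have i.i.d. Bernoulli(`p`) coordinates.  If `ŵ` assigns to each
syndrome a minimum-weight element of the corresponding coset, then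
`Pr[wt(ŵ(HW)) > τn] ≤ 2^{-n D(τ‖p)} + Pr[ŵ(HW) ≠ W]`, and in particular
`Pr[wt(W) > τn] ≤ 2^{-n D(τ‖p)}`. -/
theorem stmt_3 (n m : ℕ) (H : Matrix (Fin m) (Fin n) (ZMod 2))
    (hH : LinearIndependent (ZMod 2) (fun i => H i))
    (p τ : ℝ) (hp0 : 0 ≤ p) (hpτ : p < τ) (hτ : τ < 1 / 2)
    (wh : (Fin m → ZMod 2) → (Fin n → ZMod 2))
    (hwhmem : ∀ q, H.mulVec (wh q) = q)
    (hwhmin : ∀ q w, H.mulVec w = q → hammingNorm (wh q) ≤ hammingNorm w) :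
    bernProb n p (fun w => (hammingNorm (wh (H.mulVec w)) : ℝ) > τ * n)
        ≤ (2 : ℝ) ^ (-((n : ℝ) * klBern τ p)) + bernProb n p (fun w => wh (H.mulVec w) ≠ w)
    ∧ bernProb n p (fun w => (hammingNorm w : ℝ) > τ * n)
        ≤ (2 : ℝ) ^ (-((n : ℝ) * klBern τ p)) := by
  have hp1 : p ≤ 1 := by linarith
  have h2 := chernoff n hp0 hpτ hτ
  refine ⟨?_, h2⟩
  have hunion := bernProb_union n hp0 hp1
    (fun w => (hammingNorm (wh (H.mulVec w)) : ℝ) > τ * n)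
    (fun w => (hammingNorm w : ℝ) > τ * n)
    (fun w => wh (H.mulVec w) ≠ w)
    (by
      intro w hA
      by_cases hw : wh (H.mulVec w) = w
      · left
        rwa [hw] at hA
      · right
        exact hw)
  linarith
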